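/- A pair (≿, c), where ≿ is a complete and transitive relation on an arbitrary set 𝒜 and c is a choice correspondence on finite nonempty subsets of 𝒜, has a justifiability representation if and only if it satisfies IUA and Optimization. -/

import Mathlib

open Finset

/-- A total (weak) order: complete, transitive, antisymmetric. -/
def TotalOrderRel {α : Type*} (r : α → α → Prop) : Prop :=
  (∀ a b : α, r a b ∨ r b a) ∧ Transitive r ∧ ∀ a b : α, r a b → r b a → a = b

/-- The set of `r`-maximal elements of a set `S`. -/
def argmaxOn {α : Type*} (r : α → α → Prop) (S : Set α) : Set α :=
  {x ∈ S | ∀ y ∈ S, r x y}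

/-- The justifiable set `M(A)`: union over justifications of their maximizers on `A`. -/
def justSet {α : Type*} (M : Set (α → α → Prop)) (A : Finset α) : Set α :=
  ⋃ r ∈ M, argmaxOn r (A : Set α)

/-- A justifiability representation for `(pref, c)`. -/
def JustRep {α : Type*} (pref : α → α → Prop) (c : Finset α → Finset α)
    (M : Set (α → α → Prop)) : Prop :=
  M.Nonempty ∧ (∀ r ∈ M, TotalOrderRel r) ∧
    ∀ A : Finset α, A.Nonempty → (c A : Set α) = argmaxOn pref (justSet M A)

/-- Irrelevance of Unjustifiable Alternatives. -/
def IUA {α : Type*} [DecidableEq α] (pref : α → α → Prop)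
    (c : Finset α → Finset α) : Prop :=
  ∀ (A : Finset α) (a : α), a ∈ A → (∀ b ∈ c A, pref a b) → a ∉ c A →
    ∀ B : Finset α, A ⊆ B → c (B.erase a) = c B

/-- Optimization: all chosen elements are indifferent. -/
def Optimization {α : Type*} (pref : α → α → Prop) (c : Finset α → Finset α) : Prop :=
  ∀ A : Finset α, A.Nonempty → ∀ a ∈ c A, ∀ b ∈ c A, pref a b ∧ pref b a

/-- `A` excludes `b` from below: `b ∉ c(A ∪ {b})` and `b ≿ a` for all `a ∈ A`. -/
def ExclBelow {α : Type*} [DecidableEq α] (pref : α → α → Prop)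
    (c : Finset α → Finset α) (A : Finset α) (b : α) : Prop :=
  b ∉ c (insert b A) ∧ ∀ x ∈ A, pref b x

/- ------------------------------------------------------------------------- -/
/- Auxiliary lemmas for the proof of Theorem 1.                               -/
/- ------------------------------------------------------------------------- -/

open Filter

set_option linter.unusedSectionVars false

section AuxJust

variable {α : Type*} [DecidableEq α] {pref : α → α → Prop} {c : Finset α → Finset α}

lemma mem_c_singleton_aux (hsub : ∀ A : Finset α, c A ⊆ A)
    (hne : ∀ A : Finset α, A.Nonempty → (c A).Nonempty) (x : α) : x ∈ c {x} := by
  obtain ⟨z, hz⟩ := hne {x} ⟨x, mem_singleton_self x⟩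
  have hzx : z = x := mem_singleton.mp (hsub _ hz)
  rwa [hzx] at hz

/-- If `A` excludes `a` from below, then by IUA `a` is never chosen from any superset
of `insert a A`, and can be removed without changing the choice. -/
lemma excl_kill_aux (hIUA : IUA pref c) (hsub : ∀ A : Finset α, c A ⊆ A)
    {A : Finset α} {a : α} (h : ExclBelow pref c A a) :
    ∀ C : Finset α, insert a A ⊆ C → a ∉ c C ∧ c (C.erase a) = c C := by
  have key : ∀ B : Finset α, insert a A ⊆ B → c (B.erase a) = c B := by
    intro B hB
    refine hIUA (insert a A) a (mem_insert_self a A) ?_ h.1 B hB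
    intro b hb
    have hbA : b ∈ A := by
      rcases mem_insert.mp (hsub _ hb) with h1 | h1
      · exact absurd (h1 ▸ hb) h.1
      · exact h1
    exact h.2 b hbA
  intro C hC
  refine ⟨fun haC => ?_, key C hC⟩
  rw [← key C hC] at haC
  exact (mem_erase.mp (hsub _ haC)).1 rfl

/-- If `m` weakly dominates the choice from `S` but is not chosen, then some subset of
`S` excludes `m` from below. -/
lemma exists_excl_of_dominating_aux (hcomp : ∀ a b : α, pref a b ∨ pref b a)
    (htrans : Transitive pref) (hIUA : IUA pref c) :
    ∀ S : Finset α, ∀ m, m ∈ S → m ∉ c S → (∀ b ∈ c S, pref m b) →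
      ∃ D : Finset α, D ⊆ S.erase m ∧ ExclBelow pref c D m := by
  intro S
  induction S using Finset.strongInduction with
  | _ S ih =>
    intro m hm hmc hdom
    by_cases hall : ∀ x ∈ S, pref m x
    · refine ⟨S.erase m, Finset.Subset.refl _, ?_, fun x hx => hall x (mem_of_mem_erase hx)⟩
      rwa [insert_erase hm]
    · push_neg at hall
      obtain ⟨z, hzS, hz⟩ := hall
      have hzm : pref z m := (hcomp m z).resolve_left hz
      have hzc : z ∉ c S := fun h => hz (hdom z h)
      have hrm : c (S.erase z) = c S :=
        hIUA S z hzS (fun b hb => htrans hzm (hdom b hb)) hzc S (Finset.Subset.refl S)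
      have hmz : m ≠ z := by
        rintro rfl
        exact hz ((hcomp m m).elim id id)
      obtain ⟨D, hD, hE⟩ := ih (S.erase z) (erase_ssubset hzS) m (mem_erase.mpr ⟨hmz, hm⟩)
        (by rwa [hrm]) (by rw [hrm]; exact hdom)
      refine ⟨D, fun x hx => ?_, hE⟩
      have h2 := mem_erase.mp (hD hx)
      exact mem_erase.mpr ⟨h2.1, mem_of_mem_erase h2.2⟩

/-- In any finite set `F ⊇ B₀` with `a₀ ∈ c B₀` there is an element `t` that is not
excluded from below by any subset of `F \ {t}`, and which is either `a₀` itself or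
lies outside `B₀`. -/
lemma exists_safe_top_aux (hIUA : IUA pref c) (hsub : ∀ A : Finset α, c A ⊆ A)
    (htrans : Transitive pref) :
    ∀ F B₀ : Finset α, ∀ a₀, B₀ ⊆ F → a₀ ∈ c B₀ →
      ∃ t ∈ F, (¬ ∃ A : Finset α, A ⊆ F.erase t ∧ ExclBelow pref c A t) ∧
        (t = a₀ ∨ t ∉ B₀) := by
  intro F
  induction F using Finset.strongInduction with
  | _ F ih =>
    intro B₀ a₀ hB₀F ha₀
    have ha₀B : a₀ ∈ B₀ := hsub _ ha₀
    have hsafe_of_c : ∀ t ∈ c F, ¬ ∃ A : Finset α, A ⊆ F.erase t ∧ ExclBelow pref c A t := by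
      rintro t ht ⟨A, hA, hE⟩
      have hins : insert t A ⊆ F := insert_subset (hsub _ ht) (hA.trans (erase_subset _ _))
      exact (excl_kill_aux hIUA hsub hE F hins).1 ht
    by_cases hFB : F ⊆ B₀
    · have hBF : B₀ = F := Finset.Subset.antisymm hB₀F hFB
      exact ⟨a₀, hB₀F ha₀B, hsafe_of_c a₀ (hBF ▸ ha₀), Or.inl rfl⟩
    · obtain ⟨y₀, hy₀F, hy₀B⟩ := Finset.not_subset.mp hFB
      by_cases hgood : ∃ y ∈ F, y ∉ B₀ ∧ ¬ ∃ A : Finset α, A ⊆ F.erase y ∧ ExclBelow pref c A y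
      · obtain ⟨y, hyF, hyB, hyS⟩ := hgood
        exact ⟨y, hyF, hyS, Or.inr hyB⟩
      · push_neg at hgood
        obtain ⟨Ay, hAy, hEy⟩ := hgood y₀ hy₀F hy₀B
        have hB₀F' : B₀ ⊆ F.erase y₀ := fun y hy =>
          mem_erase.mpr ⟨fun h => hy₀B (h ▸ hy), hB₀F hy⟩
        obtain ⟨t, htF', htSafe', htB⟩ := ih (F.erase y₀) (erase_ssubset hy₀F) B₀ a₀ hB₀F' ha₀
        by_cases hUt : ∃ A : Finset α, A ⊆ F.erase t ∧ ExclBelow pref c A t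
        · exfalso
          obtain ⟨A, hA, hEt⟩ := hUt
          have hty₀ : t ≠ y₀ := (mem_erase.mp htF').1
          have hy₀A : y₀ ∈ A := by
            by_contra hy₀A
            refine htSafe' ⟨A, fun x hx => ?_, hEt⟩
            have hx' := mem_erase.mp (hA hx)
            exact mem_erase.mpr ⟨hx'.1, mem_erase.mpr ⟨fun h => hy₀A (h ▸ hx), hx'.2⟩⟩
          set C₁ := insert t A ∪ insert y₀ Ay with hC₁
          have k1 : c (C₁.erase y₀) = c C₁ :=
            (excl_kill_aux hIUA hsub hEy C₁ subset_union_right).2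
          have k2 : t ∉ c C₁ :=
            (excl_kill_aux hIUA hsub hEt C₁ subset_union_left).1
          have htC₁ : t ∈ C₁.erase y₀ :=
            mem_erase.mpr ⟨hty₀, mem_union_left _ (mem_insert_self t A)⟩
          have hIns : insert t ((C₁.erase y₀).erase t) = C₁.erase y₀ := insert_erase htC₁
          have hEx : ExclBelow pref c ((C₁.erase y₀).erase t) t := by
            constructor
            · rw [hIns, k1]; exact k2
            · intro x hx
              have hxt := (mem_erase.mp hx).1
              have hxy₀ := (mem_erase.mp (mem_of_mem_erase hx)).1
              have hxC₁ := mem_of_mem_erase (mem_of_mem_erase hx)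
              rcases mem_union.mp hxC₁ with h1 | h1
              · rcases mem_insert.mp h1 with h2 | h2
                · exact absurd h2 hxt
                · exact hEt.2 x h2
              · rcases mem_insert.mp h1 with h2 | h2
                · exact absurd h2 hxy₀
                · exact htrans (hEt.2 y₀ hy₀A) (hEy.2 x h2)
          refine htSafe' ⟨(C₁.erase y₀).erase t, ?_, hEx⟩
          intro x hx
          have hxt := (mem_erase.mp hx).1
          have hxy₀ := (mem_erase.mp (mem_of_mem_erase hx)).1
          have hxC₁ := mem_of_mem_erase (mem_of_mem_erase hx)
          have hxF : x ∈ F := by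
            rcases mem_union.mp hxC₁ with h1 | h1
            · rcases mem_insert.mp h1 with h2 | h2
              · exact absurd h2 hxt
              · exact mem_of_mem_erase (hA h2)
            · rcases mem_insert.mp h1 with h2 | h2
              · exact absurd h2 hxy₀
              · exact mem_of_mem_erase (hAy h2)
          exact mem_erase.mpr ⟨hxt, mem_erase.mpr ⟨hxy₀, hxF⟩⟩
        · exact ⟨t, mem_of_mem_erase htF', hUt, htB⟩

/-- Finite construction: a linear order (as a duplicate-free list, best first) on any
finite `F ⊇ B₀` such that every exclusion inside `F` is witnessed by an earlier element,
and `a₀ ∈ c B₀` comes before every other element of `B₀`. -/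
lemma exists_good_list_aux (hIUA : IUA pref c) (hsub : ∀ A : Finset α, c A ⊆ A)
    (hne : ∀ A : Finset α, A.Nonempty → (c A).Nonempty) (htrans : Transitive pref) :
    ∀ F B₀ : Finset α, ∀ a₀, B₀ ⊆ F → a₀ ∈ c B₀ →
      ∃ l : List α, l.Nodup ∧ l.toFinset = F ∧
        (∀ A : Finset α, ∀ a, a ∈ F → A ⊆ F → a ∉ A → ExclBelow pref c A a →
          ∃ x ∈ A, l.idxOf x < l.idxOf a) ∧
        (∀ y ∈ B₀, y ≠ a₀ → l.idxOf a₀ < l.idxOf y) := by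
  intro F
  induction F using Finset.strongInduction with
  | _ F ih =>
    intro B₀ a₀ hB₀F ha₀
    have ha₀B : a₀ ∈ B₀ := hsub _ ha₀
    obtain ⟨t, htF, htSafe, htB⟩ := exists_safe_top_aux hIUA hsub htrans F B₀ a₀ hB₀F ha₀
    by_cases hF' : (F.erase t).Nonempty
    · have hlt : F.erase t ⊂ F := erase_ssubset htF
      have build : ∀ l' : List α, l'.Nodup → l'.toFinset = F.erase t →
          (∀ A : Finset α, ∀ a, a ∈ F.erase t → A ⊆ F.erase t → a ∉ A → ExclBelow pref c A a →
            ∃ x ∈ A, l'.idxOf x < l'.idxOf a) →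
          ((t :: l').Nodup ∧ (t :: l').toFinset = F ∧
            (∀ A : Finset α, ∀ a, a ∈ F → A ⊆ F → a ∉ A → ExclBelow pref c A a →
              ∃ x ∈ A, (t :: l').idxOf x < (t :: l').idxOf a)) := by
        intro l' hnd' htf' hexc'
        have htl' : t ∉ l' := fun h =>
          absurd (htf' ▸ List.mem_toFinset.mpr h) (notMem_erase t F)
        have hidx : ∀ z, z ≠ t → (t :: l').idxOf z = l'.idxOf z + 1 := by
          intro z hz
          exact List.idxOf_cons_ne l' (Ne.symm hz)
        refine ⟨List.nodup_cons.mpr ⟨htl', hnd'⟩, ?_, ?_⟩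
        · rw [List.toFinset_cons, htf', insert_erase htF]
        · intro A a haF hAF haA hE
          by_cases hat : a = t
          · exfalso
            refine htSafe ⟨A, fun x hx => ?_, hat ▸ hE⟩
            exact mem_erase.mpr ⟨fun h => haA ((h.trans hat.symm) ▸ hx), hAF hx⟩
          · by_cases hta : t ∈ A
            · refine ⟨t, hta, ?_⟩
              rw [List.idxOf_cons_self, hidx a hat]
              exact Nat.succ_pos _
            · have hAF' : A ⊆ F.erase t := fun x hx =>
                mem_erase.mpr ⟨fun h => hta (h ▸ hx), hAF hx⟩
              have haF' : a ∈ F.erase t := mem_erase.mpr ⟨hat, haF⟩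
              obtain ⟨x, hxA, hlt'⟩ := hexc' A a haF' hAF' haA hE
              have hxt : x ≠ t := fun h => hta (h ▸ hxA)
              refine ⟨x, hxA, ?_⟩
              rw [hidx x hxt, hidx a hat]
              exact Nat.succ_lt_succ hlt'
      rcases htB with rfl | htB
      · obtain ⟨b₀, hb₀⟩ := hF'
        obtain ⟨l', hnd', htf', hexc', _⟩ := ih (F.erase t) hlt {b₀} b₀
          (singleton_subset_iff.mpr hb₀) (mem_c_singleton_aux hsub hne b₀)
        obtain ⟨h1, h2, h3⟩ := build l' hnd' htf' hexc'
        refine ⟨t :: l', h1, h2, h3, ?_⟩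
        intro y hyB hya
        rw [List.idxOf_cons_self, List.idxOf_cons_ne l' (Ne.symm hya)]
        exact Nat.succ_pos _
      · have hB₀F' : B₀ ⊆ F.erase t := fun y hy =>
          mem_erase.mpr ⟨fun h => htB (h ▸ hy), hB₀F hy⟩
        obtain ⟨l', hnd', htf', hexc', htop'⟩ := ih (F.erase t) hlt B₀ a₀ hB₀F' ha₀
        obtain ⟨h1, h2, h3⟩ := build l' hnd' htf' hexc'
        refine ⟨t :: l', h1, h2, h3, ?_⟩
        intro y hyB hya
        have hyt : y ≠ t := fun h => htB (h ▸ hyB)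
        have hat : a₀ ≠ t := fun h => htB (h ▸ ha₀B)
        rw [List.idxOf_cons_ne l' (Ne.symm hyt), List.idxOf_cons_ne l' (Ne.symm hat)]
        exact Nat.succ_lt_succ (htop' y hyB hya)
    · have hFe : F.erase t = ∅ := not_nonempty_iff_eq_empty.mp hF'
      have hFt : F = {t} := by
        apply Finset.Subset.antisymm
        · intro x hx
          rcases eq_or_ne x t with rfl | hxt
          · exact mem_singleton_self x
          · exact absurd (mem_erase.mpr ⟨hxt, hx⟩) (by rw [hFe]; exact notMem_empty x)
        · exact singleton_subset_iff.mpr htF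
      refine ⟨[t], List.nodup_singleton t, by simp [hFt], ?_, ?_⟩
      · intro A a haF hAF haA hE
        exfalso
        have hat : a = t := by rw [hFt] at haF; exact mem_singleton.mp haF
        have hA0 : A = ∅ := by
          apply eq_empty_of_forall_notMem
          intro x hx
          have hxF := hAF hx
          rw [hFt] at hxF
          exact haA (((mem_singleton.mp hxF).trans hat.symm) ▸ hx)
        have := hE.1
        rw [hA0] at this
        simp only [LawfulSingleton.insert_empty_eq] at this
        exact this (mem_c_singleton_aux hsub hne a)
      · intro y hyB hya
        exfalso
        have hyt : y = t := by
          have := hB₀F hyB; rw [hFt] at this; exact mem_singleton.mp this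
        have ha₀t : a₀ = t := by
          have := hB₀F ha₀B; rw [hFt] at this; exact mem_singleton.mp this
        exact hya (hyt.trans ha₀t.symm)

/-- Compactness step: a global total order in which `a₀ ∈ c B₀` is maximal on `B₀`
and every exclusion is witnessed. -/
lemma exists_order_aux (hIUA : IUA pref c) (hsub : ∀ A : Finset α, c A ⊆ A)
    (hne : ∀ A : Finset α, A.Nonempty → (c A).Nonempty) (htrans : Transitive pref)
    (B₀ : Finset α) (a₀ : α) (ha₀ : a₀ ∈ c B₀) :
    ∃ r : α → α → Prop, TotalOrderRel r ∧
      (∀ A : Finset α, ∀ a, a ∉ A → ExclBelow pref c A a → ∃ x ∈ A, ¬ r a x) ∧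
      (∀ y ∈ B₀, r a₀ y) := by
  have hgl := fun G : Finset α =>
    exists_good_list_aux hIUA hsub hne htrans (G ∪ B₀) B₀ a₀ subset_union_right ha₀
  choose l hnd htf hexc htop using hgl
  let U : Ultrafilter (Finset α) := Ultrafilter.of atTop
  have hUp : ∀ F₀ : Finset α, {G : Finset α | F₀ ⊆ G} ∈ U := by
    intro F₀
    exact (Ultrafilter.of_le (atTop : Filter (Finset α))) (Filter.mem_atTop F₀)
  let r : α → α → Prop := fun x y =>
    {G : Finset α | x ∈ G ∧ y ∈ G ∧ (l G).idxOf x ≤ (l G).idxOf y} ∈ U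
  have hmeml : ∀ (G : Finset α) (x : α), x ∈ G → x ∈ l G := by
    intro G x hx
    rw [← List.mem_toFinset, htf G]
    exact mem_union_left _ hx
  have hpair : ∀ x y : α, {G : Finset α | x ∈ G ∧ y ∈ G} ∈ U := by
    intro x y
    refine Filter.mem_of_superset (hUp {x, y}) ?_
    intro G hG
    exact ⟨hG (mem_insert_self _ _), hG (mem_insert_of_mem (mem_singleton_self _))⟩
  have hcomplete : ∀ x y, r x y ∨ r y x := by
    intro x y
    have hsubun : {G : Finset α | x ∈ G ∧ y ∈ G} ⊆
        {G : Finset α | x ∈ G ∧ y ∈ G ∧ (l G).idxOf x ≤ (l G).idxOf y} ∪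
        {G : Finset α | y ∈ G ∧ x ∈ G ∧ (l G).idxOf y ≤ (l G).idxOf x} := by
      rintro G ⟨hx, hy⟩
      rcases le_total ((l G).idxOf x) ((l G).idxOf y) with h | h
      · exact Or.inl ⟨hx, hy, h⟩
      · exact Or.inr ⟨hy, hx, h⟩
    exact Ultrafilter.union_mem_iff.mp (Filter.mem_of_superset (hpair x y) hsubun)
  have htransr : Transitive r := by
    intro x y z hxy hyz
    refine Filter.mem_of_superset (Filter.inter_mem hxy hyz) ?_
    rintro G ⟨⟨hx, hy, h1⟩, ⟨hy', hz, h2⟩⟩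
    exact ⟨hx, hz, h1.trans h2⟩
  have hanti : ∀ x y, r x y → r y x → x = y := by
    intro x y hxy hyx
    obtain ⟨G, ⟨hx, hy, h1⟩, ⟨hy', hx', h2⟩⟩ :=
      Ultrafilter.nonempty_of_mem (Filter.inter_mem hxy hyx)
    exact (List.idxOf_inj (hmeml G x hx)).mp (le_antisymm h1 h2)
  refine ⟨r, ⟨hcomplete, htransr, hanti⟩, ?_, ?_⟩
  · intro A a haA hE
    have hcover : {G : Finset α | insert a A ⊆ G} ⊆
        ⋃ x ∈ (A : Set α),
          {G : Finset α | x ∈ G ∧ a ∈ G ∧ (l G).idxOf x < (l G).idxOf a} := by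
      intro G hG
      have haG : a ∈ G ∪ B₀ := mem_union_left _ (hG (mem_insert_self a A))
      have hAG : A ⊆ G ∪ B₀ := fun x hx => mem_union_left _ (hG (mem_insert_of_mem hx))
      obtain ⟨x, hxA, hlt⟩ := hexc G A a haG hAG haA hE
      exact Set.mem_biUnion (Finset.mem_coe.mpr hxA)
        ⟨hG (mem_insert_of_mem hxA), hG (mem_insert_self a A), hlt⟩
    have hbig := Filter.mem_of_superset (hUp (insert a A)) hcover
    obtain ⟨x, hxA, hS⟩ := (Ultrafilter.finite_biUnion_mem_iff (A.finite_toSet)).mp hbig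
    refine ⟨x, Finset.mem_coe.mp hxA, ?_⟩
    intro hra
    obtain ⟨G, ⟨hxG, haG, h1⟩, ⟨haG', hxG', h2⟩⟩ :=
      Ultrafilter.nonempty_of_mem (Filter.inter_mem hS hra)
    exact absurd (h2.trans_lt h1) (lt_irrefl _)
  · intro y hy
    rcases eq_or_ne y a₀ with rfl | hya
    · refine Filter.mem_of_superset (hpair y y) ?_
      rintro G ⟨h1, h2⟩
      exact ⟨h1, h2, le_refl _⟩
    · refine Filter.mem_of_superset (hpair a₀ y) ?_
      rintro G ⟨h1, h2⟩
      exact ⟨h1, h2, le_of_lt (htop G y hy hya)⟩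

end AuxJust

/-- Theorem 1: `(pref, c)` has a justifiability representation
iff it satisfies IUA and Optimization. -/
theorem justRep_iff_IUA_and_Optimization {α : Type*} [DecidableEq α]
    (pref : α → α → Prop) (c : Finset α → Finset α)
    (hcomp : ∀ a b : α, pref a b ∨ pref b a) (htrans : Transitive pref)
    (hsub : ∀ A : Finset α, c A ⊆ A)
    (hne : ∀ A : Finset α, A.Nonempty → (c A).Nonempty) :
    (∃ M : Set (α → α → Prop), JustRep pref c M) ↔
      IUA pref c ∧ Optimization pref c := by
  constructor
  · rintro ⟨M, hMne, hMtot, hMrep⟩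
    constructor
    · -- IUA
      intro A a haA hdom hac B hAB
      have hAne : A.Nonempty := ⟨a, haA⟩
      have hBne : B.Nonempty := ⟨a, hAB haA⟩
      obtain ⟨b0, hb0⟩ := hne A hAne
      have hrepA := hMrep A hAne
      have hb0arg : b0 ∈ argmaxOn pref (justSet M A) := by
        rw [← hrepA]; exact Finset.mem_coe.mpr hb0
      have hanotJ : a ∉ justSet M A := by
        intro haJ
        have harg : a ∈ argmaxOn pref (justSet M A) :=
          ⟨haJ, fun y hy => htrans (hdom b0 hb0) (hb0arg.2 y hy)⟩
        rw [← hrepA] at harg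
        exact hac (Finset.mem_coe.mp harg)
      have hwit : ∀ r ∈ M, ∃ y ∈ A, ¬ r a y := by
        intro r hrM
        by_contra hcon
        push_neg at hcon
        refine hanotJ (Set.mem_biUnion hrM ?_)
        exact ⟨Finset.mem_coe.mpr haA, fun y hy => hcon y (Finset.mem_coe.mp hy)⟩
      have key : ∀ r ∈ M,
          argmaxOn r ((B.erase a : Finset α) : Set α) = argmaxOn r (B : Set α) := by
        intro r hrM
        obtain ⟨hcompr, htransr, _⟩ := hMtot r hrM
        obtain ⟨yr, hyrA, hyr⟩ := hwit r hrM
        have hray : r yr a := (hcompr a yr).resolve_left hyr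
        have hyrne : yr ≠ a := by
          rintro rfl
          exact hyr ((hcompr yr yr).elim id id)
        ext z
        constructor
        · rintro ⟨hz, hzdom⟩
          have hzB : z ∈ (B : Set α) :=
            Finset.mem_coe.mpr (mem_of_mem_erase (Finset.mem_coe.mp hz))
          refine ⟨hzB, fun w hw => ?_⟩
          rcases eq_or_ne w a with rfl | hwa
          · have hyrB : yr ∈ ((B.erase w : Finset α) : Set α) :=
              Finset.mem_coe.mpr (mem_erase.mpr ⟨hyrne, hAB hyrA⟩)
            exact htransr (hzdom yr hyrB) hray
          · exact hzdom w (Finset.mem_coe.mpr (mem_erase.mpr ⟨hwa, Finset.mem_coe.mp hw⟩))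
        · rintro ⟨hz, hzdom⟩
          have hzne : z ≠ a := by
            rintro rfl
            exact hyr (hzdom yr (Finset.mem_coe.mpr (hAB hyrA)))
          refine ⟨Finset.mem_coe.mpr (mem_erase.mpr ⟨hzne, Finset.mem_coe.mp hz⟩),
            fun w hw => ?_⟩
          exact hzdom w (Finset.mem_coe.mpr (mem_of_mem_erase (Finset.mem_coe.mp hw)))
      have hBe : (B.erase a).Nonempty :=
        ⟨b0, mem_erase.mpr ⟨fun h => hac (h ▸ hb0), hAB (hsub A hb0)⟩⟩
      have hJeq : justSet M (B.erase a) = justSet M B := by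
        unfold justSet
        exact Set.iUnion₂_congr key
      apply Finset.coe_injective
      rw [hMrep _ hBe, hMrep B hBne, hJeq]
    · -- Optimization
      intro A hA a ha b hb
      have h := hMrep A hA
      have ha' : a ∈ argmaxOn pref (justSet M A) := by rw [← h]; exact Finset.mem_coe.mpr ha
      have hb' : b ∈ argmaxOn pref (justSet M A) := by rw [← h]; exact Finset.mem_coe.mpr hb
      exact ⟨ha'.2 b hb'.1, hb'.2 a ha'.1⟩
  · rintro ⟨hIUA, hOpt⟩
    refine ⟨{r : α → α → Prop | TotalOrderRel r ∧
      ∀ A : Finset α, ∀ a, a ∉ A → ExclBelow pref c A a → ∃ x ∈ A, ¬ r a x},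
      ?_, fun r hr => hr.1, ?_⟩
    · -- nonempty
      by_cases hα : Nonempty α
      · obtain ⟨x⟩ := hα
        obtain ⟨r, h1, h2, _⟩ := exists_order_aux hIUA hsub hne htrans {x} x
          (mem_c_singleton_aux hsub hne x)
        exact ⟨r, h1, h2⟩
      · refine ⟨fun _ _ => True, ⟨fun a b => Or.inl trivial, fun _ _ _ _ _ => trivial,
          fun a b _ _ => absurd (Nonempty.intro a) hα⟩,
          fun A a ha hE => absurd (Nonempty.intro a) hα⟩
    · -- representation
      intro A hA
      set M : Set (α → α → Prop) := {r : α → α → Prop | TotalOrderRel r ∧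
        ∀ A : Finset α, ∀ a, a ∉ A → ExclBelow pref c A a → ∃ x ∈ A, ¬ r a x} with hMdef
      have hcJarg : ∀ b ∈ c A, ∃ rb ∈ M, b ∈ argmaxOn rb (A : Set α) := by
        intro b hb
        obtain ⟨rb, h1, h2, h3⟩ := exists_order_aux hIUA hsub hne htrans A b hb
        exact ⟨rb, ⟨h1, h2⟩,
          ⟨Finset.mem_coe.mpr (hsub A hb), fun y hy => h3 y (Finset.mem_coe.mp hy)⟩⟩
      have hcJ : ∀ b ∈ c A, b ∈ justSet M A := by
        intro b hb
        obtain ⟨rb, hrb, harg⟩ := hcJarg b hb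
        exact Set.mem_biUnion hrb harg
      apply Set.Subset.antisymm
      · intro b hb
        have hbc : b ∈ c A := Finset.mem_coe.mp hb
        refine ⟨hcJ b hbc, ?_⟩
        intro y hy
        obtain ⟨r', hr', hy'⟩ := Set.mem_iUnion₂.mp hy
        have hyA' : y ∈ A := Finset.mem_coe.mp hy'.1
        by_contra hnb
        have hpyb : pref y b := (hcomp b y).resolve_left hnb
        have hyc : y ∉ c A := fun h => hnb (hOpt A hA b hbc y h).1
        have hydomc : ∀ b' ∈ c A, pref y b' := fun b' hb' =>
          htrans hpyb (hOpt A hA b hbc b' hb').1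
        obtain ⟨D, hD, hEx⟩ :=
          exists_excl_of_dominating_aux hcomp htrans hIUA A y hyA' hyc hydomc
        obtain ⟨z, hzD, hnr⟩ := hr'.2 D y (fun h => (mem_erase.mp (hD h)).1 rfl) hEx
        exact hnr (hy'.2 z (Finset.mem_coe.mpr (mem_of_mem_erase (hD hzD))))
      · rintro x ⟨hxJ, hdom⟩
        obtain ⟨r', hr', hx'⟩ := Set.mem_iUnion₂.mp hxJ
        have hxA : x ∈ A := Finset.mem_coe.mp hx'.1
        by_contra hxc
        have hxc' : x ∉ c A := fun h => hxc (Finset.mem_coe.mpr h)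
        have hdomc : ∀ b' ∈ c A, pref x b' := fun b' hb' => hdom b' (hcJ b' hb')
        obtain ⟨D, hD, hEx⟩ :=
          exists_excl_of_dominating_aux hcomp htrans hIUA A x hxA hxc' hdomc
        obtain ⟨z, hzD, hnr⟩ := hr'.2 D x (fun h => (mem_erase.mp (hD h)).1 rfl) hEx
        exact hnr (hx'.2 z (Finset.mem_coe.mpr (mem_of_mem_erase (hD hzD))))
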